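/- Let L be a reduced 1-compact compactly generated multiplicative lattice such that the set of compact elements is multiplicatively closed and Clique(Γᵐ(L)) < ∞. Then 0 is the meet of a finite number of minimal prime elements of L. -/

import Mathlib

variable {α : Type*}

/-- Iterated product `a^n` in a multiplicative lattice (with `a^0 = ⊤`). -/
def mpow [CompleteLattice α] (mul : α → α → α) (a : α) : ℕ → α
  | 0 => ⊤
  | n + 1 => mul a (mpow mul a n)

/-- `mul` makes the complete lattice `α` into a multiplicative lattice. -/
def IsMulLattice [CompleteLattice α] (mul : α → α → α) : Prop :=
  (∀ a b : α, mul a b = mul b a) ∧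
  (∀ a b c : α, mul (mul a b) c = mul a (mul b c)) ∧
  (∀ (a : α) (s : Set α), mul a (sSup s) = ⨆ b ∈ s, mul a b) ∧
  (∀ a b : α, mul a b ≤ a ⊓ b) ∧
  (∀ a : α, mul a ⊤ = a)

/-- The multiplicative lattice is reduced: the only nilpotent element is `⊥`. -/
def LatReduced [CompleteLattice α] (mul : α → α → α) : Prop :=
  ∀ (a : α) (n : ℕ), mpow mul a (n + 1) = ⊥ → a = ⊥

/-- `a* = sup {x | x·a = 0}`. -/
def starAnn [CompleteLattice α] (mul : α → α → α) (a : α) : α :=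
  sSup {x : α | mul x a = ⊥}

/-- A prime element of a multiplicative lattice. -/
def IsPrimeElt [CompleteLattice α] (mul : α → α → α) (p : α) : Prop :=
  p ≠ ⊤ ∧ ∀ a b : α, mul a b ≤ p → a ≤ p ∨ b ≤ p

/-- The zero-divisor graph `Γᵐ(L)` of a multiplicative lattice. -/
def zdg [CompleteLattice α] (mul : α → α → α) : SimpleGraph α where
  Adj a b := a ≠ b ∧ a ≠ ⊥ ∧ b ≠ ⊥ ∧ mul a b = ⊥ ∧ mul b a = ⊥
  symm := ⟨fun a b h => ⟨h.1.symm, h.2.2.1, h.2.1, h.2.2.2.2, h.2.2.2.1⟩⟩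
  loopless := ⟨fun a h => h.1 rfl⟩

/-- `Clique(Γᵐ(L)) < ∞`. -/
def CliqueBounded [CompleteLattice α] (mul : α → α → α) : Prop :=
  ∃ N : ℕ, ∀ s : Finset α, (zdg mul).IsClique ↑s → s.card ≤ N

namespace MLaux

theorem zorn_min {β : Type*} [Preorder β] (s : Set β)
    (ih : ∀ c ⊆ s, IsChain (· ≤ ·) c → ∃ lb ∈ s, ∀ z ∈ c, lb ≤ z) :
    ∃ m, m ∈ s ∧ ∀ z ∈ s, z ≤ m → m ≤ z := by
  obtain ⟨m, hm⟩ := zorn_le₀ (α := βᵒᵈ) s fun c hc hchain => ih c hc hchain.symm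
  exact ⟨m, hm.1, fun z hz hzm => hm.2 hz hzm⟩

section
variable [CompleteLattice α] {mul : α → α → α} (hL : IsMulLattice mul)
include hL

theorem comm (a b : α) : mul a b = mul b a := hL.1 a b
theorem assoc (a b c : α) : mul (mul a b) c = mul a (mul b c) := hL.2.1 a b c
theorem mul_le_left (a b : α) : mul a b ≤ a := (hL.2.2.2.1 a b).trans inf_le_left
theorem mul_le_right (a b : α) : mul a b ≤ b := (hL.2.2.2.1 a b).trans inf_le_right
theorem mul_top (a : α) : mul a ⊤ = a := hL.2.2.2.2 a
theorem top_mul (a : α) : mul ⊤ a = a := (comm hL ⊤ a) ▸ hL.2.2.2.2 a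
theorem mul_bot (a : α) : mul a ⊥ = ⊥ := le_antisymm (mul_le_right hL a ⊥) bot_le
theorem bot_mul (a : α) : mul ⊥ a = ⊥ := (comm hL ⊥ a) ▸ mul_bot hL a

theorem mul_sup (a b c : α) : mul a (b ⊔ c) = mul a b ⊔ mul a c := by
  rw [← sSup_pair, hL.2.2.1, iSup_pair]

theorem sup_mul (a b c : α) : mul (a ⊔ b) c = mul a c ⊔ mul b c := by
  rw [comm hL, mul_sup hL, comm hL c a, comm hL c b]

theorem mono_right {b c : α} (a : α) (h : b ≤ c) : mul a b ≤ mul a c := by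
  calc mul a b ≤ mul a b ⊔ mul a c := le_sup_left
    _ = mul a (b ⊔ c) := (mul_sup hL a b c).symm
    _ = mul a c := by rw [sup_eq_right.2 h]

theorem mono_left {a b : α} (h : a ≤ b) (c : α) : mul a c ≤ mul b c := by
  rw [comm hL a c, comm hL b c]; exact mono_right hL c h

theorem mul_le_mul {a b c d : α} (h₁ : a ≤ c) (h₂ : b ≤ d) : mul a b ≤ mul c d :=
  (mono_left hL h₁ b).trans (mono_right hL c h₂)

theorem mpow_one (a : α) : mpow mul a 1 = a := mul_top hL a

theorem mpow_add (a : α) (m n : ℕ) :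
    mul (mpow mul a m) (mpow mul a n) = mpow mul a (m + n) := by
  induction m with
  | zero => simp [mpow, top_mul hL]
  | succ k ih =>
      show mul (mul a (mpow mul a k)) (mpow mul a n) = mpow mul a (k + 1 + n)
      rw [assoc hL, ih, Nat.add_right_comm]; rfl

theorem mpow_le_self (a : α) (n : ℕ) : mpow mul a (n + 1) ≤ a := mul_le_left hL _ _

theorem mpow_mul_le (s a : α) (n : ℕ) :
    mpow mul (mul s a) (n + 1) ≤ mul s (mpow mul a (n + 1)) := by
  induction n with
  | zero => rw [mpow_one hL, mpow_one hL]
  | succ k ih =>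
      show mul (mul s a) (mpow mul (mul s a) (k + 1)) ≤ _
      calc mul (mul s a) (mpow mul (mul s a) (k + 1))
          ≤ mul (mul s a) (mul s (mpow mul a (k + 1))) := mono_right hL _ ih
        _ ≤ mul (mul s a) (mpow mul a (k + 1)) :=
            mono_right hL _ (mul_le_right hL _ _)
        _ = mul s (mpow mul a (k + 2)) := by rw [assoc hL]; rfl

omit hL in
theorem mpow_compact {a : α} (htop : IsCompactElement (⊤ : α))
    (hmc : ∀ a b : α, IsCompactElement a →
      IsCompactElement b → IsCompactElement (mul a b))
    (ha : IsCompactElement a) (n : ℕ) :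
    IsCompactElement (mpow mul a n) := by
  induction n with
  | zero => exact htop
  | succ k ih => exact hmc a _ ha ih

theorem mul_sup_sup_le {q u v : α} (h : mul u v ≤ q) : mul (q ⊔ u) (q ⊔ v) ≤ q := by
  rw [sup_mul hL, mul_sup hL, mul_sup hL]
  refine sup_le (sup_le ?_ ?_) (sup_le ?_ h) <;>
    first | exact mul_le_left hL _ _ | exact mul_le_right hL _ _


/-- Lemma A: a multiplicatively closed set of compact elements avoiding `x₀ = ⊥`
can be separated from by a prime. -/
theorem exists_prime_avoid (M : Set α)
    (hMne : M.Nonempty)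
    (hMc : ∀ m ∈ M, IsCompactElement m)
    (hMmul : ∀ m ∈ M, ∀ n ∈ M, ∃ r ∈ M, r ≤ mul m n)
    (hM : ∀ m ∈ M, ¬ m ≤ (⊥ : α)) :
    ∃ p : α, IsPrimeElt mul p ∧ ∀ m ∈ M, ¬ m ≤ p := by
  obtain ⟨q, hq⟩ := zorn_le₀ {x : α | ∀ m ∈ M, ¬ m ≤ x} (fun c hc hchain => by
    rcases c.eq_empty_or_nonempty with rfl | hcne
    · exact ⟨⊥, hM, by simp⟩
    · refine ⟨sSup c, fun m hm hmle => ?_, fun z hz => le_sSup hz⟩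
      obtain ⟨x, hxc, hmx⟩ :=
        (CompleteLattice.isCompactElement_iff_le_of_directed_sSup_le α m).1
          (hMc m hm) c hcne (hchain.directedOn) hmle
      exact hc hxc m hm hmx)
  refine ⟨q, ⟨?_, ?_⟩, hq.1⟩
  · rintro rfl
    obtain ⟨m, hm⟩ := hMne
    exact hq.1 m hm le_top
  · intro u v huv
    by_contra hcon
    push_neg at hcon
    obtain ⟨hu, hv⟩ := hcon
    have key : ∀ w : α, ¬ w ≤ q → ∃ m ∈ M, m ≤ q ⊔ w := by
      intro w hw
      by_contra hmem
      push_neg at hmem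
      have : q ⊔ w ≤ q := hq.2 (fun m hm hmle => hmem m hm hmle) le_sup_left
      exact hw (le_sup_right.trans this)
    obtain ⟨m₁, hm₁, hle₁⟩ := key u hu
    obtain ⟨m₂, hm₂, hle₂⟩ := key v hv
    obtain ⟨r, hr, hrle⟩ := hMmul m₁ hm₁ m₂ hm₂
    exact hq.1 r hr (hrle.trans ((mul_le_mul hL hle₁ hle₂).trans (mul_sup_sup_le hL huv)))

theorem sInf_chain_prime (C : Set α)
    (hC : ∀ x ∈ C, ∀ y ∈ C, x ≤ y ∨ y ≤ x) (hne : C.Nonempty)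
    (hCp : ∀ p ∈ C, IsPrimeElt mul p) : IsPrimeElt mul (sInf C) := by
  constructor
  · intro htop
    obtain ⟨p, hp⟩ := hne
    exact (hCp p hp).1 (top_le_iff.1 (htop ▸ sInf_le hp))
  · intro u v huv
    by_cases hu : u ≤ sInf C
    · exact Or.inl hu
    right
    rw [le_sInf_iff] at hu ⊢
    push_neg at hu
    obtain ⟨p₀, hp₀, hup₀⟩ := hu
    intro r hr
    rcases hC r hr p₀ hp₀ with h | h
    · rcases (hCp r hr).2 u v (huv.trans (sInf_le hr)) with h' | h'
      · exact absurd (h'.trans h) hup₀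
      · exact h'
    · rcases (hCp p₀ hp₀).2 u v (huv.trans (sInf_le hp₀)) with h' | h'
      · exact absurd h' hup₀
      · exact h'.trans h


/-- Lemma B: below a prime avoiding all powers of `c`, there is a globally minimal
prime avoiding `c`. -/
theorem exists_minimal_prime_avoid {c p : α} (hp : IsPrimeElt mul p)
    (hpow : ∀ n : ℕ, ¬ mpow mul c (n + 1) ≤ p) :
    ∃ q : α, q ≤ p ∧ IsPrimeElt mul q ∧ (∀ r : α, IsPrimeElt mul r → r ≤ q → r = q) ∧
      ¬ c ≤ q := by
  obtain ⟨q, hqmem, hqmin⟩ := zorn_min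
    {x : α | IsPrimeElt mul x ∧ x ≤ p ∧ ∀ n : ℕ, ¬ mpow mul c (n + 1) ≤ x}
    (fun C hC hchain => by
      rcases C.eq_empty_or_nonempty with rfl | hcne
      · exact ⟨p, ⟨hp, le_rfl, hpow⟩, by simp⟩
      · refine ⟨sInf C, ⟨sInf_chain_prime hL C
          (fun x hx y hy => hchain.total hx hy) hcne (fun r hr => (hC hr).1),
          ?_, fun n hn => ?_⟩, fun z hz => sInf_le hz⟩
        · obtain ⟨r, hr⟩ := hcne
          exact (sInf_le hr).trans (hC hr).2.1
        · obtain ⟨r, hr⟩ := hcne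
          exact (hC hr).2.2 n (hn.trans (sInf_le hr)))
  refine ⟨q, hqmem.2.1, hqmem.1, fun r hr hrq => ?_, fun hc => hqmem.2.2 0 ?_⟩
  · exact le_antisymm hrq (hqmin r ⟨hr, hrq.trans hqmem.2.1,
      fun n hn => hqmem.2.2 n (hn.trans hrq)⟩ hrq)
  · rw [mpow_one hL]; exact hc

/-- Every nonzero compact element avoids some minimal prime. -/
theorem exists_minimal_prime_not_above (hred : LatReduced mul)
    (htop : IsCompactElement (⊤ : α))
    (hmc : ∀ a b : α, IsCompactElement a →
      IsCompactElement b → IsCompactElement (mul a b))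
    {c : α} (hc : IsCompactElement c) (hcbot : c ≠ ⊥) :
    ∃ q : α, IsPrimeElt mul q ∧ (∀ r : α, IsPrimeElt mul r → r ≤ q → r = q) ∧
      ¬ c ≤ q := by
  set M : Set α := {m | ∃ n : ℕ, m = mpow mul c (n + 1)} with hM
  obtain ⟨p, hp, hpM⟩ := exists_prime_avoid hL M ⟨c, 0, (mpow_one hL c).symm⟩
    (by rintro m ⟨n, rfl⟩; exact mpow_compact htop hmc hc _)
    (by rintro m ⟨n₁, rfl⟩ m' ⟨n₂, rfl⟩
        exact ⟨mpow mul c (n₁ + 1 + (n₂ + 1)), ⟨n₁ + n₂ + 1, by ring_nf⟩,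
          le_of_eq (mpow_add hL c _ _).symm⟩)
    (by rintro m ⟨n, rfl⟩ hle
        exact hcbot (hred c n (le_bot_iff.1 hle)))
  obtain ⟨q, _, hq1, hq2, hq3⟩ := exists_minimal_prime_avoid hL hp
    (fun n => hpM _ ⟨n, rfl⟩)
  exact ⟨q, hq1, hq2, hq3⟩

/-- Annihilator lemma: if `p` is a minimal prime and `a ≤ p` is compact, then some
`b ≰ p` kills `a`. -/
theorem mul_mul_mul_comm' (a b c d : α) :
    mul (mul a b) (mul c d) = mul (mul a c) (mul b d) := by
  rw [assoc hL, assoc hL]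
  congr 1
  rw [← assoc hL, ← assoc hL, comm hL b c]

theorem exists_ann_of_minimal_prime (hred : LatReduced mul)
    (htop : IsCompactElement (⊤ : α))
    (hmc : ∀ a b : α, IsCompactElement a →
      IsCompactElement b → IsCompactElement (mul a b))
    [IsCompactlyGenerated α]
    {p a : α} (hp : IsPrimeElt mul p) (hmin : ∀ r : α, IsPrimeElt mul r → r ≤ p → r = p)
    (ha : IsCompactElement a) (hap : a ≤ p) :
    ∃ b : α, ¬ b ≤ p ∧ mul a b = ⊥ := by
  by_contra hcon
  push_neg at hcon
  have hntop : ¬ (⊤ : α) ≤ p := fun h => hp.1 (top_le_iff.1 h)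
  set M : Set α := {m | ∃ s : α, IsCompactElement s ∧ ¬ s ≤ p ∧
    ∃ n : ℕ, m = mul s (mpow mul a (n + 1))} with hMdef
  obtain ⟨q, hq, hqM⟩ := exists_prime_avoid hL M
    ⟨mul ⊤ (mpow mul a 1), ⊤, htop, hntop, 0, rfl⟩
    (by rintro m ⟨s, hs, hsp, n, rfl⟩
        exact hmc s _ hs (mpow_compact htop hmc ha _))
    (by rintro m ⟨s₁, hs₁, hs₁p, n₁, rfl⟩ m' ⟨s₂, hs₂, hs₂p, n₂, rfl⟩
        refine ⟨mul (mul s₁ s₂) (mpow mul a (n₁ + 1 + (n₂ + 1))),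
          ⟨mul s₁ s₂, hmc _ _ hs₁ hs₂,
            fun h => (hp.2 s₁ s₂ h).elim hs₁p hs₂p, n₁ + n₂ + 1, by ring_nf⟩, ?_⟩
        rw [← mpow_add hL, mul_mul_mul_comm' hL])
    (by rintro m ⟨s, hs, hsp, n, rfl⟩ hle
        have h0 : mul s (mpow mul a (n + 1)) = ⊥ := le_bot_iff.1 hle
        have h1 : mpow mul (mul s a) (n + 1) = ⊥ :=
          le_bot_iff.1 (h0 ▸ mpow_mul_le hL s a n)
        have h2 : mul a s = ⊥ := (comm hL s a) ▸ hred _ n h1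
        exact hcon s hsp h2)
  have hqp : q ≤ p := by
    by_contra hqp
    rw [le_iff_compact_le_imp] at hqp
    push_neg at hqp
    obtain ⟨s, hs, hsq, hsp⟩ := hqp
    exact hqM _ ⟨s, hs, hsp, 0, rfl⟩ ((mul_le_left hL s _).trans hsq)
  have := hmin q hq hqp
  subst this
  exact hqM _ ⟨⊤, htop, hntop, 0, rfl⟩ (by rw [top_mul hL, mpow_one hL]; exact hap)


theorem pair_lemma (hred : LatReduced mul)
    (htop : IsCompactElement (⊤ : α))
    (hmc : ∀ a b : α, IsCompactElement a →
      IsCompactElement b → IsCompactElement (mul a b))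
    [IsCompactlyGenerated α]
    {p q : α} (hp : IsPrimeElt mul p) (hpmin : ∀ r : α, IsPrimeElt mul r → r ≤ p → r = p)
    (hq : IsPrimeElt mul q) (hqmin : ∀ r : α, IsPrimeElt mul r → r ≤ q → r = q)
    (hne : p ≠ q) :
    ∃ x y : α, x ≤ p ∧ ¬ x ≤ q ∧ y ≤ q ∧ ¬ y ≤ p ∧ mul x y = ⊥ := by
  have hqp : ¬ q ≤ p := fun h => hne (hpmin q hq h).symm
  rw [le_iff_compact_le_imp] at hqp
  push_neg at hqp
  obtain ⟨a, ha, haq, hap⟩ := hqp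
  obtain ⟨b, hbq, hab⟩ := exists_ann_of_minimal_prime hL hred htop hmc hq hqmin ha haq
  have hbp : b ≤ p := by
    rcases hp.2 a b (by rw [hab]; exact bot_le) with h | h
    · exact absurd h hap
    · exact h
  exact ⟨b, a, hbp, hbq, haq, hap, (comm hL b a).trans hab⟩

end

/-- Product of a list of elements. -/
def lprod [CompleteLattice α] (mul : α → α → α) : List α → α
  | [] => ⊤
  | a :: l => mul a (lprod mul l)

section
variable [CompleteLattice α] {mul : α → α → α} (hL : IsMulLattice mul)
include hL

theorem lprod_le_of_mem {a : α} {l : List α} (h : a ∈ l) : lprod mul l ≤ a := by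
  induction l with
  | nil => simp at h
  | cons b l ih =>
      rcases List.mem_cons.1 h with rfl | h
      · exact mul_le_left hL _ _
      · exact (mul_le_right hL _ _).trans (ih h)

theorem lprod_not_le_prime {p : α} (hp : IsPrimeElt mul p) {l : List α}
    (hl : ∀ a ∈ l, ¬ a ≤ p) (hne : l ≠ []) : ¬ lprod mul l ≤ p := by
  induction l with
  | nil => exact absurd rfl hne
  | cons b l ih =>
      intro hle
      rcases hp.2 b (lprod mul l) hle with h | h
      · exact hl b List.mem_cons_self h
      · rcases List.eq_nil_or_concat l with rfl | hlne
        · simp only [lprod] at h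
          exact hp.1 (top_le_iff.1 h)
        · exact ih (fun a ha => hl a (List.mem_cons_of_mem _ ha))
            (by rintro rfl; simp at hlne) h

/-- The set of minimal primes is finite when the clique number is bounded. -/
theorem minimal_primes_finite (hred : LatReduced mul)
    (htop : IsCompactElement (⊤ : α))
    (hmc : ∀ a b : α, IsCompactElement a →
      IsCompactElement b → IsCompactElement (mul a b))
    [IsCompactlyGenerated α] (hclique : CliqueBounded mul) :
    {p : α | IsPrimeElt mul p ∧ ∀ r : α, IsPrimeElt mul r → r ≤ p → r = p}.Finite := by
  classical
  obtain ⟨N, hN⟩ := hclique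
  by_contra hinf
  rw [← Set.not_infinite, not_not] at hinf
  obtain ⟨T, hTsub, hTcard⟩ := hinf.exists_subset_card_eq (N + 2)
  set k := N + 2 with hk
  have hlen : T.toList.length = k := by rw [Finset.length_toList, hTcard]
  set P : Fin k → α := fun i => T.toList.get (Fin.cast hlen.symm i) with hP
  have hPmem : ∀ i, P i ∈ {p : α | IsPrimeElt mul p ∧
      ∀ r : α, IsPrimeElt mul r → r ≤ p → r = p} := by
    intro i
    exact hTsub (Finset.mem_toList.1 (T.toList.get_mem _))
  have hPinj : Function.Injective P := by
    intro i j hij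
    have := (List.nodup_iff_injective_get.1 T.nodup_toList) hij
    simpa [Fin.ext_iff] using this
  have pair : ∀ i j : Fin k, i < j → ∃ xy : α × α, xy.1 ≤ P i ∧ ¬ xy.1 ≤ P j ∧
      xy.2 ≤ P j ∧ ¬ xy.2 ≤ P i ∧ mul xy.1 xy.2 = ⊥ := by
    intro i j hij
    obtain ⟨x, y, h1, h2, h3, h4, h5⟩ := pair_lemma hL hred htop hmc
      (hPmem i).1 (hPmem i).2 (hPmem j).1 (hPmem j).2
      (fun h => absurd (hPinj h) (Fin.ne_of_lt hij))
    exact ⟨(x, y), h1, h2, h3, h4, h5⟩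
  choose f hf1 hf2 hf3 hf4 hf5 using pair
  set e : Fin k → Fin k → α := fun i j =>
    if h : i < j then (f i j h).2 else if h' : j < i then (f j i h').1 else ⊥ with he
  have he1 : ∀ i j : Fin k, i ≠ j → e i j ≤ P j ∧ ¬ e i j ≤ P i := by
    intro i j hij
    rcases lt_or_gt_of_ne hij with h | h
    · simp only [he, dif_pos h]
      exact ⟨hf3 i j h, hf4 i j h⟩
    · simp only [he, dif_neg (not_lt_of_gt h), dif_pos h]
      exact ⟨hf1 j i h, hf2 j i h⟩
  have he2 : ∀ i j : Fin k, i ≠ j → mul (e i j) (e j i) = ⊥ := by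
    intro i j hij
    rcases lt_or_gt_of_ne hij with h | h
    · simp only [he, dif_pos h, dif_neg (not_lt_of_gt h)]
      rw [comm hL]
      exact hf5 i j h
    · simp only [he, dif_pos h, dif_neg (not_lt_of_gt h)]
      exact hf5 j i h
  set c : Fin k → α := fun i =>
    lprod mul (((Finset.univ.erase i).toList).map (e i)) with hc
  have hcle : ∀ i j : Fin k, i ≠ j → c i ≤ e i j := by
    intro i j hij
    refine lprod_le_of_mem hL (List.mem_map_of_mem (f := e i) ?_)
    rw [Finset.mem_toList, Finset.mem_erase]
    exact ⟨hij.symm, Finset.mem_univ j⟩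
  have hcnle : ∀ i : Fin k, ¬ c i ≤ P i := by
    intro i
    refine lprod_not_le_prime hL (hPmem i).1 ?_ ?_
    · intro a ha
      obtain ⟨j, hj, rfl⟩ := List.mem_map.1 ha
      rw [Finset.mem_toList, Finset.mem_erase] at hj
      exact (he1 i j hj.1.symm).2
    · intro hemp
      rw [List.map_eq_nil_iff, Finset.toList_eq_nil, Finset.erase_eq_empty_iff] at hemp
      rcases hemp with h | h
      · exact absurd h Finset.univ_nonempty.ne_empty
      · have : 2 ≤ Fintype.card (Fin k) := by rw [Fintype.card_fin]; omega
        rw [← Finset.card_univ, h, Finset.card_singleton] at this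
        omega
  have hcbot : ∀ i : Fin k, c i ≠ ⊥ := fun i h =>
    hcnle i (h ▸ bot_le)
  have hcmul : ∀ i j : Fin k, i ≠ j → mul (c i) (c j) = ⊥ := by
    intro i j hij
    refine le_bot_iff.1 ?_
    calc mul (c i) (c j) ≤ mul (e i j) (e j i) :=
          mul_le_mul hL (hcle i j hij) (hcle j i hij.symm)
      _ = ⊥ := he2 i j hij
  have hcinj : Function.Injective c := by
    intro i j hij
    by_contra hne
    have h0 := hcmul i j hne
    rw [← hij] at h0
    have h2 : mpow mul (c i) 2 = ⊥ := by
      show mul (c i) (mul (c i) ⊤) = ⊥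
      rw [mul_top hL]
      exact h0
    exact hcbot i (hred (c i) 1 h2)
  have hcliq : (zdg mul).IsClique ↑(Finset.image c Finset.univ) := by
    intro a ha b hb hab
    simp only [Finset.coe_image, Set.mem_image] at ha hb
    obtain ⟨i, -, rfl⟩ := ha
    obtain ⟨j, -, rfl⟩ := hb
    have hij : i ≠ j := fun h => hab (h ▸ rfl)
    exact ⟨hab, hcbot i, hcbot j, hcmul i j hij, hcmul j i hij.symm⟩
  have hcard : (Finset.image c Finset.univ).card = k := by
    rw [Finset.card_image_of_injective _ hcinj, Finset.card_univ, Fintype.card_fin]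
  have := hN _ hcliq
  rw [hcard] at this
  omega

end
end MLaux

theorem bot_eq_finite_meet_of_minimal_primes [CompleteLattice α] [IsCompactlyGenerated α]
    (mul : α → α → α) (hL : IsMulLattice mul) (hred : LatReduced mul)
    (htop : IsCompactElement (⊤ : α))
    (hmc : ∀ a b : α, IsCompactElement a →
      IsCompactElement b → IsCompactElement (mul a b))
    (hclique : CliqueBounded mul) :
    ∃ s : Finset α,
      (∀ p ∈ s, IsPrimeElt mul p ∧ ∀ q : α, IsPrimeElt mul q → q ≤ p → q = p) ∧
      s.inf id = ⊥ := by
  classical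
  have hfin := MLaux.minimal_primes_finite hL hred htop hmc hclique
  refine ⟨hfin.toFinset, fun p hp => hfin.mem_toFinset.1 hp, ?_⟩
  rw [Finset.inf_id_eq_sInf, Set.Finite.coe_toFinset]
  refine le_antisymm ?_ bot_le
  rw [le_iff_compact_le_imp]
  intro c hc hcle
  by_contra hcb
  have hcbot : c ≠ ⊥ := fun h => hcb (le_of_eq h)
  obtain ⟨q, hq1, hq2, hq3⟩ :=
    MLaux.exists_minimal_prime_not_above hL hred htop hmc hc hcbot
  exact hq3 (hcle.trans (sInf_le ⟨hq1, hq2⟩))
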